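/- Let X be a countable set and ≤ a quasi-order on X (a reflexive and transitive binary relation) such that (X, ≤) is unary FA-presentable. Then X can be partitioned into finitely many pairwise disjoint subsets A₁, …, A_m such that each part A_p, with the induced relation, is one of: a one-element set (a trivial quasi-order); a countably infinite antichain (for distinct x, y ∈ A_p neither x ≤ y nor y ≤ x); a countably infinite ascending chain (there is an enumeration A_p = {x_0, x_1, x_2, …} with x_i ≤ x_j iff i ≤ j); a countably infinite descending chain (an enumeration with x_i ≤ x_j iff j ≤ i); or a countably infinite strongly connected component (x ≤ y for all x, y ∈ A_p). -/

import Mathlib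

/-- The convolution word of the pair `(m, n)`, over the three-letter alphabet `Fin 3`
(`0` plays the role of `s`, `1` of `l`, `2` of `r`). -/
def convWord (m n : ℕ) : List (Fin 3) :=
  List.replicate (min m n) 0 ++ List.replicate (m - min m n) 1 ++
    List.replicate (n - min m n) 2

/-- The convolution language of a binary relation on `ℕ`. -/
def convLang (R : ℕ → ℕ → Prop) : Language (Fin 3) :=
  {w | ∃ m n, R m n ∧ w = convWord m n}

/-- A binary relation on `ℕ` is regular if its convolution language is regular. -/
def RegularRel (R : ℕ → ℕ → Prop) : Prop :=
  (convLang R).IsRegular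
/-- The unary language over a one-letter alphabet associated to a set `L ⊆ ℕ`,
identifying `a^n` with `n`. -/
def unaryLang (L : Set ℕ) : Language Unit :=
  {w | w.length ∈ L}

/-- A (countable) structure `(X, ρ)` with one binary relation is unary FA-presentable
if there are a set `L ⊆ ℕ` whose unary language is regular and a surjection
`φ : L → X` such that equality and the relation, pulled back along `φ`, are
regular relations. -/
def UnaryFAPresentable {X : Type*} (ρ : X → X → Prop) : Prop :=
  ∃ L : Set ℕ, (unaryLang L).IsRegular ∧
    ∃ φ : ℕ → X, (∀ x, ∃ n ∈ L, φ n = x) ∧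
      RegularRel (fun m n => m ∈ L ∧ n ∈ L ∧ φ m = φ n) ∧
      RegularRel (fun m n => m ∈ L ∧ n ∈ L ∧ ρ (φ m) (φ n))


section Iter

lemma exists_iterate_period {Q : Type} [Fintype Q] (f : Q → Q) :
    ∃ N c : ℕ, 0 < c ∧ ∀ m : ℕ, N ≤ m → f^[m + c] = f^[m] := by
  classical
  obtain ⟨i, j, hne, hij⟩ := Fintype.exists_ne_map_eq_of_card_lt
    (fun i : Fin (Fintype.card (Q → Q) + 1) => f^[(i : ℕ)]) (by simp)
  have key : ∀ (a b : ℕ), a < b → f^[a] = f^[b] →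
      ∃ N c : ℕ, 0 < c ∧ ∀ m : ℕ, N ≤ m → f^[m + c] = f^[m] := by
    intro a b hab he
    refine ⟨a, b - a, by omega, fun m hm => ?_⟩
    obtain ⟨t, rfl⟩ := Nat.exists_eq_add_of_le hm
    have h1 : a + t + (b - a) = t + b := by omega
    rw [h1]
    calc f^[t + b] = f^[t] ∘ f^[b] := Function.iterate_add f t b
      _ = f^[t] ∘ f^[a] := by rw [he]
      _ = f^[t + a] := (Function.iterate_add f t a).symm
      _ = f^[a + t] := by rw [Nat.add_comm]
  rcases Nat.lt_or_ge (i : ℕ) (j : ℕ) with h | h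
  · exact key i j h hij
  · have : (j : ℕ) < (i : ℕ) :=
      lt_of_le_of_ne h (fun hh => hne (Fin.ext hh.symm))
    exact key j i this hij.symm

end Iter

lemma iterate_period_mul {Q : Type} (f : Q → Q) {N c : ℕ}
    (h : ∀ m : ℕ, N ≤ m → f^[m + c] = f^[m]) (k : ℕ) :
    ∀ m : ℕ, N ≤ m → f^[m + k * c] = f^[m] := by
  induction k with
  | zero => simp
  | succ k ih =>
      intro m hm
      have : m + (k + 1) * c = (m + k * c) + c := by ring
      rw [this, h (m + k * c) (by omega), ih m hm]

section Pumping

lemma convWord_inj {m n m' n' : ℕ} (h : convWord m n = convWord m' n') :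
    m = m' ∧ n = n' := by
  have h0 := congrArg (List.count 0) h
  have h1 := congrArg (List.count 1) h
  have h2 := congrArg (List.count 2) h
  simp (config := { decide := true }) only [convWord, List.count_append,
    List.count_replicate] at h0 h1 h2
  simp only [if_true, if_false] at h0 h1 h2
  omega

lemma mem_convLang {R : ℕ → ℕ → Prop} {m n : ℕ} :
    convWord m n ∈ convLang R ↔ R m n := by
  constructor
  · rintro ⟨m', n', hR, he⟩
    obtain ⟨rfl, rfl⟩ := convWord_inj he
    exact hR
  · intro h; exact ⟨m, n, h, rfl⟩

def Pump (R : ℕ → ℕ → Prop) (N c : ℕ) : Prop :=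
  (∀ m n, N ≤ m → N ≤ n → (R m n ↔ R (m + c) (n + c))) ∧
  (∀ m n, m + N ≤ n → (R m n ↔ R m (n + c))) ∧
  (∀ m n, n + N ≤ m → (R m n ↔ R (m + c) n))

lemma Pump.mul {R : ℕ → ℕ → Prop} {N c : ℕ} (h : Pump R N c) (k : ℕ) :
    Pump R N (k * c) := by
  induction k with
  | zero => exact ⟨fun m n _ _ => by simp, fun m n _ => by simp, fun m n _ => by simp⟩
  | succ k ih =>
      refine ⟨fun m n hm hn => ?_, fun m n hmn => ?_, fun m n hnm => ?_⟩
      · have e1 : m + (k + 1) * c = (m + k * c) + c := by ring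
        have e2 : n + (k + 1) * c = (n + k * c) + c := by ring
        rw [e1, e2, ← h.1 (m + k * c) (n + k * c) (by omega) (by omega)]
        exact ih.1 m n hm hn
      · have e2 : n + (k + 1) * c = (n + k * c) + c := by ring
        rw [e2, ← h.2.1 m (n + k * c) (by omega)]
        exact ih.2.1 m n hmn
      · have e1 : m + (k + 1) * c = (m + k * c) + c := by ring
        rw [e1, ← h.2.2 (m + k * c) n (by omega)]
        exact ih.2.2 m n hnm

lemma Pump.mono {R : ℕ → ℕ → Prop} {N N' c : ℕ} (hN : N ≤ N') (h : Pump R N c) :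
    Pump R N' c :=
  ⟨fun m n hm hn => h.1 m n (by omega) (by omega),
   fun m n hmn => h.2.1 m n (by omega),
   fun m n hnm => h.2.2 m n (by omega)⟩

lemma evalFrom_replicate {α σ : Type} (M : DFA α σ) (q : σ) (a : α) (k : ℕ) :
    M.evalFrom q (List.replicate k a) = (fun s => M.step s a)^[k] q := by
  induction k generalizing q with
  | zero => rfl
  | succ k ih =>
      rw [List.replicate_succ]
      show M.evalFrom (M.step q a) (List.replicate k a) = _
      rw [ih, Function.iterate_succ_apply]

lemma exists_pump {R : ℕ → ℕ → Prop} (hR : RegularRel R) :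
    ∃ N c : ℕ, 0 < c ∧ Pump R N c := by
  obtain ⟨σ, hσ, M, hM⟩ := hR
  set f0 : σ → σ := fun s => M.step s 0 with hf0
  set f1 : σ → σ := fun s => M.step s 1 with hf1
  set f2 : σ → σ := fun s => M.step s 2 with hf2
  have key : ∀ m n, R m n ↔
      f2^[n - min m n] (f1^[m - min m n] (f0^[min m n] M.start)) ∈ M.accept := by
    intro m n
    rw [← mem_convLang (R := R), ← hM, DFA.mem_accepts]
    show M.evalFrom M.start (convWord m n) ∈ M.accept ↔ _
    rw [convWord, DFA.evalFrom_of_append, DFA.evalFrom_of_append,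
      evalFrom_replicate, evalFrom_replicate, evalFrom_replicate]
  obtain ⟨N0, c0, hc0, h0⟩ := exists_iterate_period f0
  obtain ⟨N1, c1, hc1, h1⟩ := exists_iterate_period f1
  obtain ⟨N2, c2, hc2, h2⟩ := exists_iterate_period f2
  refine ⟨N0 + N1 + N2 + 1, c0 * c1 * c2, by positivity, ?_, ?_, ?_⟩
  · intro m n hm hn
    rw [key m n, key (m + c0 * c1 * c2) (n + c0 * c1 * c2)]
    have e1 : min (m + c0 * c1 * c2) (n + c0 * c1 * c2) = min m n + c0 * c1 * c2 := by omega
    rw [e1]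
    have e2 : m + c0 * c1 * c2 - (min m n + c0 * c1 * c2) = m - min m n := by omega
    have e3 : n + c0 * c1 * c2 - (min m n + c0 * c1 * c2) = n - min m n := by omega
    rw [e2, e3]
    have e4 : min m n + c0 * c1 * c2 = min m n + (c1 * c2) * c0 := by ring
    rw [e4, iterate_period_mul f0 h0 (c1 * c2) (min m n) (by omega)]
  · intro m n hmn
    rw [key m n, key m (n + c0 * c1 * c2)]
    have e1 : min m n = m := by omega
    have e2 : min m (n + c0 * c1 * c2) = m := by omega
    rw [e1, e2]
    have e3 : m - m = 0 := by omega
    rw [e3]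
    have e4 : n + c0 * c1 * c2 - m = (n - m) + (c0 * c1) * c2 := by
      have : c0 * c1 * c2 = (c0 * c1) * c2 := by ring
      omega
    rw [e4, iterate_period_mul f2 h2 (c0 * c1) (n - m) (by omega)]
  · intro m n hnm
    rw [key m n, key (m + c0 * c1 * c2) n]
    have e1 : min m n = n := by omega
    have e2 : min (m + c0 * c1 * c2) n = n := by omega
    rw [e1, e2]
    have e4 : m + c0 * c1 * c2 - n = (m - n) + (c0 * c2) * c1 := by
      have : c0 * c1 * c2 = (c0 * c2) * c1 := by ring
      omega
    rw [e4, iterate_period_mul f1 h1 (c0 * c2) (m - n) (by omega)]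

lemma exists_pumpL {L : Set ℕ} (hL : (unaryLang L).IsRegular) :
    ∃ N c : ℕ, 0 < c ∧ ∀ n, N ≤ n → (n ∈ L ↔ n + c ∈ L) := by
  obtain ⟨σ, hσ, M, hM⟩ := hL
  set f : σ → σ := fun s => M.step s () with hf
  have key : ∀ n, n ∈ L ↔ f^[n] M.start ∈ M.accept := by
    intro n
    have : (List.replicate n () ∈ unaryLang L) ↔ n ∈ L := by
      show (List.replicate n ()).length ∈ L ↔ n ∈ L
      rw [List.length_replicate]
    rw [← this, ← hM, DFA.mem_accepts]
    show M.evalFrom M.start (List.replicate n ()) ∈ M.accept ↔ _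
    rw [evalFrom_replicate]
  obtain ⟨N, c, hc, h⟩ := exists_iterate_period f
  refine ⟨N, c, hc, fun n hn => ?_⟩
  rw [key n, key (n + c), h n hn]

end Pumping


def GoodPart {X : Type*} (le : X → X → Prop) (A : Set X) : Prop :=
  (∃ x, A = {x}) ∨
  (A.Infinite ∧ ∀ x ∈ A, ∀ y ∈ A, x ≠ y → ¬ le x y ∧ ¬ le y x) ∨
  (∃ e : ℕ → X, Function.Injective e ∧ Set.range e = A ∧
    ∀ i j : ℕ, le (e i) (e j) ↔ i ≤ j) ∨
  (∃ e : ℕ → X, Function.Injective e ∧ Set.range e = A ∧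
    ∀ i j : ℕ, le (e i) (e j) ↔ j ≤ i) ∨
  (A.Infinite ∧ ∀ x ∈ A, ∀ y ∈ A, le x y)

structure Setup (X : Type u) where
  le : X → X → Prop
  L : Set ℕ
  φ : ℕ → X
  N : ℕ
  p : ℕ
  hrefl : ∀ x, le x x
  htrans : ∀ x y z, le x y → le y z → le x z
  hp : 0 < p
  hN : 0 < N
  hL : ∀ n, N ≤ n → (n ∈ L ↔ n + p ∈ L)
  hE : Pump (fun m n => m ∈ L ∧ n ∈ L ∧ φ m = φ n) N p
  hR : Pump (fun m n => m ∈ L ∧ n ∈ L ∧ le (φ m) (φ n)) N p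
  hsurj : ∀ x, ∃ n ∈ L, φ n = x

namespace Setup

variable {X : Type u} (S : Setup X)

def th (b k : ℕ) : X := S.φ (b + k * S.p)

def Base (b : ℕ) : Prop := b ∈ S.L ∧ S.N ≤ b

def ff (b : ℕ) (d : ℤ) : Prop := S.le (S.th b (-d).toNat) (S.th b d.toNat)

lemma memL_iff {b : ℕ} (hbN : S.N ≤ b) (k : ℕ) : b ∈ S.L ↔ b + k * S.p ∈ S.L := by
  induction k with
  | zero => simp
  | succ k ih =>
      calc b ∈ S.L ↔ b + k * S.p ∈ S.L := ih
        _ ↔ b + k * S.p + S.p ∈ S.L := S.hL _ (by omega)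
        _ ↔ b + (k + 1) * S.p ∈ S.L := by
              rw [show b + k * S.p + S.p = b + (k + 1) * S.p from by ring]

lemma th_mem {b : ℕ} (hb : S.Base b) (k : ℕ) : b + k * S.p ∈ S.L :=
  (S.memL_iff hb.2 k).mp hb.1

lemma eq_shift {a a' : ℕ} (ha : a ∈ S.L) (ha' : a' ∈ S.L) (hNa : S.N ≤ a) (hNa' : S.N ≤ a') :
    (S.φ a = S.φ a') ↔ (S.φ (a + S.p) = S.φ (a' + S.p)) := by
  have h := S.hE.1 a a' hNa hNa'
  have m1 : a + S.p ∈ S.L := (S.hL a hNa).mp ha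
  have m2 : a' + S.p ∈ S.L := (S.hL a' hNa').mp ha'
  exact ⟨fun he => (h.mp ⟨ha, ha', he⟩).2.2, fun he => (h.mpr ⟨m1, m2, he⟩).2.2⟩

lemma le_shift {a a' : ℕ} (ha : a ∈ S.L) (ha' : a' ∈ S.L) (hNa : S.N ≤ a) (hNa' : S.N ≤ a') :
    (S.le (S.φ a) (S.φ a')) ↔ (S.le (S.φ (a + S.p)) (S.φ (a' + S.p))) := by
  have h := S.hR.1 a a' hNa hNa'
  have m1 : a + S.p ∈ S.L := (S.hL a hNa).mp ha
  have m2 : a' + S.p ∈ S.L := (S.hL a' hNa').mp ha'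
  exact ⟨fun he => (h.mp ⟨ha, ha', he⟩).2.2, fun he => (h.mpr ⟨m1, m2, he⟩).2.2⟩

lemma le_pumpR {a a' : ℕ} (ha : a ∈ S.L) (ha' : a' ∈ S.L) (h : a + S.N ≤ a') :
    S.le (S.φ a) (S.φ a') ↔ S.le (S.φ a) (S.φ (a' + S.p)) := by
  have m2 : a' + S.p ∈ S.L := (S.hL a' (by omega)).mp ha'
  have h2 := S.hR.2.1 a a' h
  exact ⟨fun he => (h2.mp ⟨ha, ha', he⟩).2.2, fun he => (h2.mpr ⟨ha, m2, he⟩).2.2⟩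

lemma le_pumpL {a a' : ℕ} (ha : a ∈ S.L) (ha' : a' ∈ S.L) (h : a' + S.N ≤ a) :
    S.le (S.φ a) (S.φ a') ↔ S.le (S.φ (a + S.p)) (S.φ a') := by
  have m1 : a + S.p ∈ S.L := (S.hL a (by omega)).mp ha
  have h2 := S.hR.2.2 a a' h
  exact ⟨fun he => (h2.mp ⟨ha, ha', he⟩).2.2, fun he => (h2.mpr ⟨m1, ha', he⟩).2.2⟩

lemma th_shift {b b' : ℕ} (hb : S.Base b) (hb' : S.Base b') (k k' : ℕ) :
    S.th b k = S.th b' k' ↔ S.th b (k + 1) = S.th b' (k' + 1) := by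
  have h := S.eq_shift (S.th_mem hb k) (S.th_mem hb' k')
    (le_trans hb.2 (Nat.le_add_right b _)) (le_trans hb'.2 (Nat.le_add_right b' _))
  simpa [th, show b + k * S.p + S.p = b + (k + 1) * S.p from by ring,
    show b' + k' * S.p + S.p = b' + (k' + 1) * S.p from by ring] using h

lemma th_shift_add {b b' : ℕ} (hb : S.Base b) (hb' : S.Base b') (k k' t : ℕ) :
    (S.th b k = S.th b' k') ↔ (S.th b (k + t) = S.th b' (k' + t)) := by
  induction t with
  | zero => rfl
  | succ t ih => exact ih.trans (S.th_shift hb hb' (k + t) (k' + t))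

lemma th_align {b b' k k' : ℕ} (hb : S.Base b) (hb' : S.Base b')
    (h : S.th b k = S.th b' k') {i j : ℕ} (hij : i + k' = j + k) :
    S.th b i = S.th b' j := by
  rcases Nat.le_total k i with hk | hk
  · have h2 := (S.th_shift_add hb hb' k k' (i - k)).mp h
    rwa [show k + (i - k) = i from by omega, show k' + (i - k) = j from by omega] at h2
  · have h2 := S.th_shift_add hb hb' i j (k - i)
    rw [show i + (k - i) = k from by omega, show j + (k - i) = k' from by omega] at h2
    exact h2.mpr h

lemma range_subset {b b' k k' : ℕ} (hb : S.Base b) (hb' : S.Base b')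
    (h : S.th b k = S.th b' k') (hk : k' ≤ k) :
    Set.range (S.th b') ⊆ Set.range (S.th b) := by
  rintro x ⟨j, rfl⟩
  exact ⟨j + (k - k'), S.th_align hb hb' h (by omega)⟩

lemma comparable_of_not_disjoint {b b' : ℕ} (hb : S.Base b) (hb' : S.Base b')
    (h : ¬ Disjoint (Set.range (S.th b)) (Set.range (S.th b'))) :
    Set.range (S.th b') ⊆ Set.range (S.th b) ∨
      Set.range (S.th b) ⊆ Set.range (S.th b') := by
  obtain ⟨x, hx1, hx2⟩ := Set.not_disjoint_iff.mp h
  obtain ⟨k, rfl⟩ := hx1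
  obtain ⟨k', hk'⟩ := hx2
  rcases Nat.le_total k' k with hle | hle
  · exact Or.inl (S.range_subset hb hb' hk'.symm hle)
  · exact Or.inr (S.range_subset hb' hb hk' hle)

lemma finite_range_of_not_injective {b : ℕ} (hb : S.Base b)
    (hni : ¬ Function.Injective (S.th b)) : (Set.range (S.th b)).Finite := by
  have hkey : ∃ c : ℕ, 0 < c ∧ ∀ k, S.th b k = S.th b (k + c) := by
    simp only [Function.Injective] at hni
    push_neg at hni
    obtain ⟨k1, k2, h12, hne⟩ := hni
    rcases Nat.lt_or_ge k1 k2 with h | h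
    · exact ⟨k2 - k1, by omega, fun k => S.th_align hb hb h12 (by omega)⟩
    · have h' : k2 < k1 := by omega
      exact ⟨k1 - k2, by omega, fun k => S.th_align hb hb h12.symm (by omega)⟩
  obtain ⟨c, hc, hper⟩ := hkey
  have hsmall : ∀ k, ∃ j, j < c ∧ S.th b k = S.th b j := by
    intro k
    induction k using Nat.strong_induction_on with
    | _ k ih =>
      by_cases hk : k < c
      · exact ⟨k, hk, rfl⟩
      · obtain ⟨j, hj, he⟩ := ih (k - c) (by omega)
        refine ⟨j, hj, ?_⟩
        have h2 := hper (k - c)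
        rw [show k - c + c = k from by omega] at h2
        exact h2.symm.trans he
  refine Set.Finite.subset (Set.Finite.image (S.th b) (Set.finite_Iio c)) ?_
  rintro x ⟨k, rfl⟩
  obtain ⟨j, hj, he⟩ := hsmall k
  exact ⟨j, hj, he.symm⟩

lemma le_th_shift_add {b : ℕ} (hb : S.Base b) (t i j : ℕ) :
    S.le (S.th b i) (S.th b j) ↔ S.le (S.th b (i + t)) (S.th b (j + t)) := by
  induction t with
  | zero => rfl
  | succ t ih =>
      refine ih.trans ?_
      have h := S.le_shift (S.th_mem hb (i + t)) (S.th_mem hb (j + t))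
        (le_trans hb.2 (Nat.le_add_right b _)) (le_trans hb.2 (Nat.le_add_right b _))
      simpa [th, show b + (i + t) * S.p + S.p = b + (i + (t + 1)) * S.p from by ring,
        show b + (j + t) * S.p + S.p = b + (j + (t + 1)) * S.p from by ring] using h

lemma ff_eq {b : ℕ} (hb : S.Base b) (i j : ℕ) :
    S.le (S.th b i) (S.th b j) ↔ S.ff b ((j : ℤ) - (i : ℤ)) := by
  unfold ff
  rcases Nat.le_total i j with hij | hij
  · rw [show (-((j : ℤ) - (i : ℤ))).toNat = 0 from by omega,
      show ((j : ℤ) - (i : ℤ)).toNat = j - i from by omega]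
    have h3 := S.le_th_shift_add hb i 0 (j - i)
    rw [Nat.zero_add, show j - i + i = j from by omega] at h3
    exact h3.symm
  · rw [show (-((j : ℤ) - (i : ℤ))).toNat = i - j from by omega,
      show ((j : ℤ) - (i : ℤ)).toNat = 0 from by omega]
    have h3 := S.le_th_shift_add hb j (i - j) 0
    rw [Nat.zero_add, show i - j + j = i from by omega] at h3
    exact h3.symm

lemma ff_trans {b : ℕ} (hb : S.Base b) {d1 d2 : ℤ}
    (h1 : S.ff b d1) (h2 : S.ff b d2) : S.ff b (d1 + d2) := by
  set i : ℕ := d1.natAbs + d2.natAbs with hi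
  set j : ℕ := ((i : ℤ) + d1).toNat with hj
  set k : ℕ := ((i : ℤ) + d1 + d2).toNat with hk
  have a1 : S.le (S.th b i) (S.th b j) := by
    rw [S.ff_eq hb i j, show (j : ℤ) - (i : ℤ) = d1 from by omega]
    exact h1
  have a2 : S.le (S.th b j) (S.th b k) := by
    rw [S.ff_eq hb j k, show (k : ℤ) - (j : ℤ) = d2 from by omega]
    exact h2
  have := (S.ff_eq hb i k).mp (S.htrans _ _ _ a1 a2)
  rwa [show (k : ℤ) - (i : ℤ) = d1 + d2 from by omega] at this

lemma ff_refl {b : ℕ} (hb : S.Base b) : S.ff b 0 := by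
  unfold ff
  simpa using S.hrefl _

lemma ff_up {b : ℕ} (hb : S.Base b) (d : ℤ) (hd : (S.N : ℤ) ≤ d) :
    S.ff b d ↔ S.ff b (d + 1) := by
  have hN := S.hN
  unfold ff
  rw [show (-d).toNat = 0 from by omega, show (-(d+1)).toNat = 0 from by omega,
    show (d + 1).toNat = d.toNat + 1 from by omega]
  have hk : S.N ≤ d.toNat := by omega
  have hcond : (b + 0 * S.p) + S.N ≤ b + d.toNat * S.p := by
    have h1 : d.toNat ≤ d.toNat * S.p := Nat.le_mul_of_pos_right _ S.hp
    omega
  have h := S.le_pumpR (S.th_mem hb 0) (S.th_mem hb d.toNat) hcond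
  simpa [th, show b + d.toNat * S.p + S.p = b + (d.toNat + 1) * S.p from by ring] using h

lemma ff_down {b : ℕ} (hb : S.Base b) (d : ℤ) (hd : d ≤ -(S.N : ℤ)) :
    S.ff b d ↔ S.ff b (d - 1) := by
  have hN := S.hN
  unfold ff
  rw [show d.toNat = 0 from by omega, show (d - 1).toNat = 0 from by omega,
    show (-(d - 1)).toNat = (-d).toNat + 1 from by omega]
  have hcond : (b + 0 * S.p) + S.N ≤ b + (-d).toNat * S.p := by
    have h1 : (-d).toNat ≤ (-d).toNat * S.p := Nat.le_mul_of_pos_right _ S.hp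
    omega
  have h := S.le_pumpL (S.th_mem hb (-d).toNat) (S.th_mem hb 0) hcond
  simpa [th, show b + (-d).toNat * S.p + S.p = b + ((-d).toNat + 1) * S.p from by ring] using h

lemma ff_up_const {b : ℕ} (hb : S.Base b) (d : ℤ) (hd : (S.N : ℤ) ≤ d) :
    S.ff b d ↔ S.ff b (S.N : ℤ) := by
  refine Int.le_induction (motive := fun d _ => S.ff b d ↔ S.ff b (S.N : ℤ)) ?_ ?_ d hd
  · exact Iff.rfl
  · intro n hn ih
    exact ((S.ff_up hb n hn).symm.trans ih)

lemma ff_down_const {b : ℕ} (hb : S.Base b) (d : ℤ) (hd : d ≤ -(S.N : ℤ)) :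
    S.ff b d ↔ S.ff b (-(S.N : ℤ)) := by
  refine Int.le_induction_down (motive := fun d _ => S.ff b d ↔ S.ff b (-(S.N : ℤ))) ?_ ?_ d hd
  · exact Iff.rfl
  · intro n hn ih
    exact ((S.ff_down hb n hn).symm.trans ih)

lemma ff_mul {b : ℕ} (hb : S.Base b) {d : ℤ} (h : S.ff b d) (k : ℕ) :
    S.ff b (((k : ℤ) + 1) * d) := by
  induction k with
  | zero => simpa using h
  | succ k ih =>
      have := S.ff_trans hb ih h
      rwa [show ((k : ℤ) + 1) * d + d = ((((k+1) : ℕ) : ℤ) + 1) * d from by push_cast; ring]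
        at this

lemma ff_neg_false {b : ℕ} (hb : S.Base b) (hnot : ¬ S.ff b (-(S.N : ℤ))) :
    ∀ d : ℤ, d < 0 → ¬ S.ff b d := by
  intro d hd hfd
  have hN := S.hN
  have h1 := S.ff_mul hb hfd (S.N - 1)
  rw [show (((S.N - 1 : ℕ) : ℤ) + 1) = (S.N : ℤ) from by omega] at h1
  have h2 : (S.N : ℤ) * d ≤ -(S.N : ℤ) := by
    have h3 : (S.N : ℤ) * d ≤ (S.N : ℤ) * (-1) :=
      mul_le_mul_of_nonneg_left (by omega) (by positivity)
    omega
  exact hnot ((S.ff_down_const hb _ h2).mp h1)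

lemma ff_pos_false {b : ℕ} (hb : S.Base b) (hnot : ¬ S.ff b (S.N : ℤ)) :
    ∀ d : ℤ, 0 < d → ¬ S.ff b d := by
  intro d hd hfd
  have hN := S.hN
  have h1 := S.ff_mul hb hfd (S.N - 1)
  rw [show (((S.N - 1 : ℕ) : ℤ) + 1) = (S.N : ℤ) from by omega] at h1
  have h2 : (S.N : ℤ) ≤ (S.N : ℤ) * d := by
    have h3 : (S.N : ℤ) * 1 ≤ (S.N : ℤ) * d :=
      mul_le_mul_of_nonneg_left (by omega) (by positivity)
    omega
  exact hnot ((S.ff_up_const hb _ h2).mp h1)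

lemma ff_all {b : ℕ} (hb : S.Base b) (h1 : S.ff b (S.N : ℤ))
    (h2 : S.ff b (-(S.N : ℤ))) : ∀ d : ℤ, S.ff b d := by
  intro d
  set s : ℕ := d.natAbs with hs
  have ha : S.ff b ((S.N : ℤ) + (d + s)) :=
    (S.ff_up_const hb _ (by omega)).mpr h1
  have hbb : S.ff b (-(S.N : ℤ) - s) :=
    (S.ff_down_const hb _ (by omega)).mpr h2
  have := S.ff_trans hb ha hbb
  rwa [show (S.N : ℤ) + (d + s) + (-(S.N : ℤ) - s) = d from by ring] at this

lemma thread_decomp {b : ℕ} (hb : S.Base b) (hinj : Function.Injective (S.th b)) :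
    ∃ P : Set (Set X), P.Finite ∧ (∀ A ∈ P, ∀ B ∈ P, A ≠ B → Disjoint A B) ∧
      ⋃₀ P = Set.range (S.th b) ∧ ∀ A ∈ P, GoodPart S.le A := by
  have hN := S.hN
  by_cases hU : S.ff b (S.N : ℤ) <;> by_cases hD : S.ff b (-(S.N : ℤ))
  -- clique
  · refine ⟨{Set.range (S.th b)}, Set.finite_singleton _, ?_, Set.sUnion_singleton _, ?_⟩
    · rintro A rfl B rfl hne; exact absurd rfl hne
    · rintro A rfl
      refine Or.inr (Or.inr (Or.inr (Or.inr
        ⟨Set.infinite_range_of_injective hinj, ?_⟩)))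
      rintro x ⟨i, rfl⟩ y ⟨j, rfl⟩
      exact (S.ff_eq hb i j).mpr (S.ff_all hb hU hD _)
  -- ascending
  · refine ⟨(fun r => Set.range (fun k => S.th b (r + k * S.N))) '' (Set.Iio S.N),
      (Set.finite_Iio S.N).image _, ?_, ?_, ?_⟩
    · rintro A ⟨r, hr, rfl⟩ B ⟨r', hr', rfl⟩ hne
      rw [Set.disjoint_left]
      rintro x ⟨k, rfl⟩ ⟨k', hk'⟩
      have he : r' + k' * S.N = r + k * S.N := hinj hk'
      have : r' = r := by
        have h1 : (r' + k' * S.N) % S.N = (r + k * S.N) % S.N := by rw [he]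
        rwa [Nat.add_mul_mod_self_right, Nat.add_mul_mod_self_right,
          Nat.mod_eq_of_lt hr, Nat.mod_eq_of_lt hr'] at h1
      subst this
      exact hne rfl
    · ext x
      constructor
      · rintro ⟨A, ⟨r, hr, rfl⟩, k, rfl⟩
        exact ⟨r + k * S.N, rfl⟩
      · rintro ⟨k, rfl⟩
        refine ⟨_, ⟨k % S.N, Nat.mod_lt _ hN, rfl⟩, k / S.N, ?_⟩
        show S.th b (k % S.N + k / S.N * S.N) = S.th b k
        rw [Nat.mod_add_div']
    · rintro A ⟨r, hr, rfl⟩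
      refine Or.inr (Or.inr (Or.inl ⟨fun k => S.th b (r + k * S.N), ?_, rfl, ?_⟩))
      · intro k k' h
        have := hinj h
        exact Nat.eq_of_mul_eq_mul_right hN (by omega)
      · intro i j
        rw [S.ff_eq hb (r + i * S.N) (r + j * S.N)]
        constructor
        · intro h
          by_contra hij
          have hji : j < i := by omega
          have hlt : j * S.N + S.N ≤ i * S.N := by
            calc j * S.N + S.N = (j + 1) * S.N := by ring
              _ ≤ i * S.N := Nat.mul_le_mul_right _ (by omega)
          exact S.ff_neg_false hb hD _ (by omega) h
        · intro hij
          rcases Nat.eq_or_lt_of_le hij with rfl | hlt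
          · rw [show ((r + i * S.N : ℕ) : ℤ) - ((r + i * S.N : ℕ) : ℤ) = 0 from by omega]
            exact S.ff_refl hb
          · have hge : i * S.N + S.N ≤ j * S.N := by
              calc i * S.N + S.N = (i + 1) * S.N := by ring
                _ ≤ j * S.N := Nat.mul_le_mul_right _ (by omega)
            exact (S.ff_up_const hb _ (by omega)).mpr hU
  -- descending
  · refine ⟨(fun r => Set.range (fun k => S.th b (r + k * S.N))) '' (Set.Iio S.N),
      (Set.finite_Iio S.N).image _, ?_, ?_, ?_⟩
    · rintro A ⟨r, hr, rfl⟩ B ⟨r', hr', rfl⟩ hne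
      rw [Set.disjoint_left]
      rintro x ⟨k, rfl⟩ ⟨k', hk'⟩
      have he : r' + k' * S.N = r + k * S.N := hinj hk'
      have : r' = r := by
        have h1 : (r' + k' * S.N) % S.N = (r + k * S.N) % S.N := by rw [he]
        rwa [Nat.add_mul_mod_self_right, Nat.add_mul_mod_self_right,
          Nat.mod_eq_of_lt hr, Nat.mod_eq_of_lt hr'] at h1
      subst this
      exact hne rfl
    · ext x
      constructor
      · rintro ⟨A, ⟨r, hr, rfl⟩, k, rfl⟩
        exact ⟨r + k * S.N, rfl⟩
      · rintro ⟨k, rfl⟩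
        refine ⟨_, ⟨k % S.N, Nat.mod_lt _ hN, rfl⟩, k / S.N, ?_⟩
        show S.th b (k % S.N + k / S.N * S.N) = S.th b k
        rw [Nat.mod_add_div']
    · rintro A ⟨r, hr, rfl⟩
      refine Or.inr (Or.inr (Or.inr (Or.inl ⟨fun k => S.th b (r + k * S.N), ?_, rfl, ?_⟩)))
      · intro k k' h
        have := hinj h
        exact Nat.eq_of_mul_eq_mul_right hN (by omega)
      · intro i j
        rw [S.ff_eq hb (r + i * S.N) (r + j * S.N)]
        constructor
        · intro h
          by_contra hij
          have hji : i < j := by omega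
          have hlt : i * S.N + S.N ≤ j * S.N := by
            calc i * S.N + S.N = (i + 1) * S.N := by ring
              _ ≤ j * S.N := Nat.mul_le_mul_right _ (by omega)
          exact S.ff_pos_false hb hU _ (by omega) h
        · intro hij
          rcases Nat.eq_or_lt_of_le hij with rfl | hlt
          · rw [show ((r + j * S.N : ℕ) : ℤ) - ((r + j * S.N : ℕ) : ℤ) = 0 from by omega]
            exact S.ff_refl hb
          · have hge : j * S.N + S.N ≤ i * S.N := by
              calc j * S.N + S.N = (j + 1) * S.N := by ring
                _ ≤ i * S.N := Nat.mul_le_mul_right _ (by omega)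
            exact (S.ff_down_const hb _ (by omega)).mpr hD
  -- antichain
  · refine ⟨{Set.range (S.th b)}, Set.finite_singleton _, ?_, Set.sUnion_singleton _, ?_⟩
    · rintro A rfl B rfl hne; exact absurd rfl hne
    · rintro A rfl
      refine Or.inr (Or.inl ⟨Set.infinite_range_of_injective hinj, ?_⟩)
      rintro x ⟨i, rfl⟩ y ⟨j, rfl⟩ hne
      have hij : i ≠ j := fun h => hne (by rw [h])
      constructor
      · rw [S.ff_eq hb i j]
        rcases Nat.lt_or_ge i j with h | h
        · exact S.ff_pos_false hb hU _ (by omega)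
        · exact S.ff_neg_false hb hD _ (by omega)
      · rw [S.ff_eq hb j i]
        rcases Nat.lt_or_ge i j with h | h
        · exact S.ff_neg_false hb hD _ (by omega)
        · exact S.ff_pos_false hb hU _ (by omega)

lemma assemble (bs : List ℕ) :
    ∃ (T : Set (Set X)) (F : Set X), T.Finite ∧ F.Finite ∧
      (∀ A ∈ T, ∃ b, S.Base b ∧ Function.Injective (S.th b) ∧ A = Set.range (S.th b)) ∧
      (∀ A ∈ T, ∀ B ∈ T, A ≠ B → Disjoint A B) ∧
      (∀ b ∈ bs, S.Base b → Set.range (S.th b) ⊆ ⋃₀ T ∪ F) := by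
  classical
  induction bs with
  | nil => exact ⟨∅, ∅, Set.finite_empty, Set.finite_empty, by simp, by simp, by simp⟩
  | cons b bs ih =>
      obtain ⟨T, F, hTfin, hFfin, hTw, hTd, hcov⟩ := ih
      by_cases hbB : S.Base b
      swap
      · refine ⟨T, F, hTfin, hFfin, hTw, hTd, ?_⟩
        intro b' hb' hB'
        rcases List.mem_cons.mp hb' with rfl | hmem
        · exact absurd hB' hbB
        · exact hcov b' hmem hB'
      by_cases hinj : Function.Injective (S.th b)
      swap
      · refine ⟨T, F ∪ Set.range (S.th b), hTfin,
          hFfin.union (S.finite_range_of_not_injective hbB hinj), hTw, hTd, ?_⟩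
        intro b' hb' hB'
        rcases List.mem_cons.mp hb' with rfl | hmem
        · exact fun x hx => Or.inr (Or.inr hx)
        · intro x hx
          rcases hcov b' hmem hB' hx with h | h
          · exact Or.inl h
          · exact Or.inr (Or.inl h)
      by_cases hsub : ∃ A ∈ T, Set.range (S.th b) ⊆ A
      · refine ⟨T, F, hTfin, hFfin, hTw, hTd, ?_⟩
        intro b' hb' hB'
        rcases List.mem_cons.mp hb' with rfl | hmem
        · obtain ⟨A, hAT, hAsub⟩ := hsub
          exact fun x hx => Or.inl ⟨A, hAT, hAsub hx⟩
        · exact hcov b' hmem hB'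
      · -- new maximal thread
        have hcomp : ∀ A ∈ T, ¬ Disjoint A (Set.range (S.th b)) → A ⊆ Set.range (S.th b) := by
          intro A hAT hnd
          obtain ⟨b', hb'B, hb'i, rfl⟩ := hTw A hAT
          rcases S.comparable_of_not_disjoint hbB hb'B
              (fun h => hnd (Disjoint.symm h)) with h | h
          · exact h
          · exact absurd ⟨_, hAT, h⟩ hsub
        refine ⟨insert (Set.range (S.th b)) {A ∈ T | Disjoint A (Set.range (S.th b))},
          F, (hTfin.subset (Set.sep_subset _ _)).insert _, hFfin, ?_, ?_, ?_⟩
        · rintro A (rfl | ⟨hAT, -⟩)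
          · exact ⟨b, hbB, hinj, rfl⟩
          · exact hTw A hAT
        · rintro A (rfl | ⟨hAT, hAd⟩) B (rfl | ⟨hBT, hBd⟩) hne
          · exact absurd rfl hne
          · exact hBd.symm
          · exact hAd
          · exact hTd A hAT B hBT hne
        · have hTsub : ⋃₀ T ⊆
              ⋃₀ insert (Set.range (S.th b)) {A ∈ T | Disjoint A (Set.range (S.th b))} := by
            rintro x ⟨A, hAT, hxA⟩
            by_cases hd : Disjoint A (Set.range (S.th b))
            · exact ⟨A, Or.inr ⟨hAT, hd⟩, hxA⟩
            · exact ⟨_, Or.inl rfl, hcomp A hAT hd hxA⟩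
          intro b' hb' hB'
          rcases List.mem_cons.mp hb' with rfl | hmem
          · exact fun x hx => Or.inl ⟨_, Or.inl rfl, hx⟩
          · intro x hx
            rcases hcov b' hmem hB' hx with h | h
            · exact Or.inl (hTsub h)
            · exact Or.inr h

lemma main : ∃ 𝒞 : Set (Set X), 𝒞.Finite ∧
    (∀ A ∈ 𝒞, ∀ B ∈ 𝒞, A ≠ B → Disjoint A B) ∧
    ⋃₀ 𝒞 = Set.univ ∧ ∀ A ∈ 𝒞, GoodPart S.le A := by
  classical
  obtain ⟨T, F, hTfin, hFfin, hTw, hTd, hcov⟩ :=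
    S.assemble ((List.range S.p).map (fun i => S.N + i))
  have cover_univ : ∀ x : X, x ∈ ⋃₀ T ∪ (F ∪ S.φ '' (Set.Iio S.N)) := by
    intro x
    obtain ⟨n, hnL, rfl⟩ := S.hsurj x
    rcases Nat.lt_or_ge n S.N with hn | hn
    · exact Or.inr (Or.inr ⟨n, hn, rfl⟩)
    · set r := S.N + (n - S.N) % S.p with hr
      have hmd : (n - S.N) % S.p + (n - S.N) / S.p * S.p = n - S.N := Nat.mod_add_div' _ _
      have hn_eq : r + ((n - S.N) / S.p) * S.p = n := by omega
      have hbase : S.Base r := by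
        refine ⟨?_, by omega⟩
        have := S.memL_iff (b := r) (by omega) ((n - S.N) / S.p)
        rw [hn_eq] at this
        exact this.mpr hnL
      have hmem_bs : r ∈ (List.range S.p).map (fun i => S.N + i) := by
        simp only [List.mem_map, List.mem_range]
        exact ⟨(n - S.N) % S.p, Nat.mod_lt _ S.hp, rfl⟩
      have hx : S.φ n ∈ Set.range (S.th r) := by
        refine ⟨(n - S.N) / S.p, ?_⟩
        show S.φ (r + (n - S.N) / S.p * S.p) = S.φ n
        rw [hn_eq]
      rcases hcov r hmem_bs hbase hx with h | h
      · exact Or.inl h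
      · exact Or.inr (Or.inl h)
  have key : ∀ A : Set X, ∃ P : Set (Set X), A ∈ T →
      (P.Finite ∧ (∀ B ∈ P, ∀ C ∈ P, B ≠ C → Disjoint B C) ∧
        ⋃₀ P = A ∧ ∀ B ∈ P, GoodPart S.le B) := by
    intro A
    by_cases hA : A ∈ T
    · obtain ⟨b, hbB, hbi, rfl⟩ := hTw A hA
      obtain ⟨P, h1, h2, h3, h4⟩ := S.thread_decomp hbB hbi
      exact ⟨P, fun _ => ⟨h1, h2, h3, h4⟩⟩
    · exact ⟨∅, fun h => absurd h hA⟩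
  choose Pt hPt using key
  set Fstar : Set X := Set.univ \ ⋃₀ T with hFstar
  have hFsub : Fstar ⊆ F ∪ S.φ '' (Set.Iio S.N) := fun x hx =>
    (cover_univ x).resolve_left hx.2
  have hFfin' : Fstar.Finite :=
    (hFfin.union ((Set.finite_Iio S.N).image S.φ)).subset hFsub
  have hPsub : ∀ A ∈ T, ∀ B ∈ Pt A, B ⊆ A := by
    intro A hA B hB
    rw [← (hPt A hA).2.2.1]
    exact Set.subset_sUnion_of_mem hB
  refine ⟨(⋃ A ∈ T, Pt A) ∪ ((fun x => ({x} : Set X)) '' Fstar), ?_, ?_, ?_, ?_⟩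
  · exact (hTfin.biUnion (fun A hA => (hPt A hA).1)).union (hFfin'.image _)
  · intro A hA B hB hne
    rcases hA with hA | ⟨x, hxF, rfl⟩ <;> rcases hB with hB | ⟨y, hyF, rfl⟩
    · simp only [Set.mem_iUnion] at hA hB
      obtain ⟨A1, hA1T, hA⟩ := hA
      obtain ⟨B1, hB1T, hB⟩ := hB
      by_cases h11 : A1 = B1
      · subst h11
        exact (hPt A1 hA1T).2.1 A hA B hB hne
      · exact (hTd A1 hA1T B1 hB1T h11).mono (hPsub A1 hA1T A hA) (hPsub B1 hB1T B hB)
    · simp only [Set.mem_iUnion] at hA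
      obtain ⟨A1, hA1T, hA⟩ := hA
      exact Set.disjoint_singleton_right.mpr
        (fun hyA => hyF.2 ⟨A1, hA1T, hPsub A1 hA1T A hA hyA⟩)
    · simp only [Set.mem_iUnion] at hB
      obtain ⟨B1, hB1T, hB⟩ := hB
      exact (Set.disjoint_singleton_right.mpr
        (fun hxB => hxF.2 ⟨B1, hB1T, hPsub B1 hB1T B hB hxB⟩)).symm
    · have hxy : x ≠ y := fun h => hne (by rw [h])
      simp [Set.disjoint_singleton_left, hxy]
  · apply Set.eq_univ_of_forall
    intro x
    by_cases hx : x ∈ ⋃₀ T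
    · obtain ⟨A1, hA1T, hxA⟩ := hx
      have : x ∈ ⋃₀ Pt A1 := by rw [(hPt A1 hA1T).2.2.1]; exact hxA
      obtain ⟨B, hB, hxB⟩ := this
      exact ⟨B, Or.inl (Set.mem_iUnion.mpr ⟨A1, Set.mem_iUnion.mpr ⟨hA1T, hB⟩⟩), hxB⟩
    · exact ⟨{x}, Or.inr ⟨x, ⟨Set.mem_univ x, hx⟩, rfl⟩, rfl⟩
  · intro A hA
    rcases hA with hA | ⟨x, hxF, rfl⟩
    · simp only [Set.mem_iUnion] at hA
      obtain ⟨A1, hA1T, hA⟩ := hA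
      exact (hPt A1 hA1T).2.2.2 A hA
    · exact Or.inl ⟨x, rfl⟩

end Setup


theorem stmt14 {X : Type*} [Countable X] (le : X → X → Prop)
    (hrefl : ∀ x, le x x) (htrans : ∀ x y z, le x y → le y z → le x z)
    (hfa : UnaryFAPresentable le) :
    ∃ (m : ℕ) (A : Fin m → Set X),
      (∀ p q : Fin m, p ≠ q → Disjoint (A p) (A q)) ∧
      (⋃ p, A p) = Set.univ ∧
      ∀ p : Fin m,
        (∃ x, A p = {x}) ∨
        ((A p).Infinite ∧ ∀ x ∈ A p, ∀ y ∈ A p, x ≠ y → ¬ le x y ∧ ¬ le y x) ∨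
        (∃ e : ℕ → X, Function.Injective e ∧ Set.range e = A p ∧
          ∀ i j : ℕ, le (e i) (e j) ↔ i ≤ j) ∨
        (∃ e : ℕ → X, Function.Injective e ∧ Set.range e = A p ∧
          ∀ i j : ℕ, le (e i) (e j) ↔ j ≤ i) ∨
        ((A p).Infinite ∧ ∀ x ∈ A p, ∀ y ∈ A p, le x y) := by
  classical
  obtain ⟨L, hLreg, φ, hsurj, hEreg, hRreg⟩ := hfa
  obtain ⟨N1, c1, hc1, hP1⟩ := exists_pump hEreg
  obtain ⟨N2, c2, hc2, hP2⟩ := exists_pump hRreg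
  obtain ⟨N3, c3, hc3, hL3⟩ := exists_pumpL hLreg
  set N := N1 + N2 + N3 + 1 with hNdef
  set p := c1 * c2 * c3 with hpdef
  have hppos : 0 < p := by positivity
  have hNpos : 0 < N := by omega
  have hE' : Pump (fun m n => m ∈ L ∧ n ∈ L ∧ φ m = φ n) N p := by
    have h := (hP1.mul (c2 * c3)).mono (show N1 ≤ N by omega)
    rwa [show c2 * c3 * c1 = p from by ring] at h
  have hR' : Pump (fun m n => m ∈ L ∧ n ∈ L ∧ le (φ m) (φ n)) N p := by
    have h := (hP2.mul (c1 * c3)).mono (show N2 ≤ N by omega)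
    rwa [show c1 * c3 * c2 = p from by ring] at h
  have hLmul : ∀ k : ℕ, ∀ n, N3 ≤ n → (n ∈ L ↔ n + k * c3 ∈ L) := by
    intro k
    induction k with
    | zero => simp
    | succ k ih =>
        intro n hn
        calc n ∈ L ↔ n + k * c3 ∈ L := ih n hn
          _ ↔ n + k * c3 + c3 ∈ L := hL3 _ (by omega)
          _ ↔ n + (k + 1) * c3 ∈ L := by
                rw [show n + k * c3 + c3 = n + (k + 1) * c3 from by ring]
  have hL' : ∀ n, N ≤ n → (n ∈ L ↔ n + p ∈ L) := by
    intro n hn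
    have h := hLmul (c1 * c2) n (by omega)
    rwa [show c1 * c2 * c3 = p from rfl] at h
  set S : Setup X := ⟨le, L, φ, N, p, hrefl, htrans, hppos, hNpos, hL', hE', hR', hsurj⟩
    with hSdef
  obtain ⟨𝒞, hfin, hdisj, hcov, hgood⟩ := S.main
  refine ⟨hfin.toFinset.card, fun i => ((hfin.toFinset.equivFin.symm i : hfin.toFinset) : Set X),
    ?_, ?_, ?_⟩
  · intro i j hne
    refine hdisj _ (hfin.mem_toFinset.mp (hfin.toFinset.equivFin.symm i).2)
      _ (hfin.mem_toFinset.mp (hfin.toFinset.equivFin.symm j).2) ?_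
    intro h
    exact hne (hfin.toFinset.equivFin.symm.injective (Subtype.ext h))
  · apply Set.eq_univ_of_forall
    intro x
    have hx : x ∈ ⋃₀ 𝒞 := by rw [hcov]; exact Set.mem_univ x
    obtain ⟨A, hA, hxA⟩ := hx
    refine Set.mem_iUnion.mpr ⟨hfin.toFinset.equivFin ⟨A, hfin.mem_toFinset.mpr hA⟩, ?_⟩
    rw [Equiv.symm_apply_apply]
    exact hxA
  · intro i
    have h := hgood _ (hfin.mem_toFinset.mp (hfin.toFinset.equivFin.symm i).2)
    unfold GoodPart at h
    exact h
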